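/- (Fourth-moment variance identity for eigenvalue ratios, supporting computation for Theorem 5.) Let p ≥ 1 and let g : [0,∞) → [0,∞) be measurable such that y ↦ g(‖y‖²)·‖y‖⁴ is Lebesgue-integrable on ℝ^p. Then for any two orthonormal vectors u, v ∈ ℝ^p (‖u‖ = ‖v‖ = 1, uᵀv = 0): ∫_{ℝ^p} g(‖y‖²) · ( (uᵀy)² − (vᵀy)² )² dy = (4/(p(p+2))) · ∫_{ℝ^p} g(‖y‖²) ‖y‖⁴ dy. -/

import Mathlib

open MeasureTheory

section Helpers

variable {p : ℕ}

local notation "E" => EuclideanSpace ℝ (Fin p)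

private lemma lie_integral (e : E ≃ₗᵢ[ℝ] E) (f : E → ℝ) :
    ∫ y, f (e y) = ∫ y, f y :=
  e.measurePreserving.integral_comp e.toHomeomorph.toMeasurableEquiv.measurableEmbedding f

private lemma normsq (x : E) : ‖x‖ ^ 2 = ∑ k, x k ^ 2 := by
  rw [EuclideanSpace.norm_eq, Real.sq_sqrt (by positivity)]
  simp [Real.norm_eq_abs, sq_abs]

private lemma sq_apply_le (x : E) (i : Fin p) : x i ^ 2 ≤ ‖x‖ ^ 2 := by
  rw [normsq]
  exact Finset.single_le_sum (fun k _ => sq_nonneg (x k)) (Finset.mem_univ i)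

private lemma sum_split {i j : Fin p} (hij : i ≠ j) (h : Fin p → ℝ) :
    ∑ k, h k = h i + (h j + ∑ k ∈ (Finset.univ.erase i).erase j, h k) := by
  rw [Finset.add_sum_erase _ h (by simp [hij.symm]), Finset.add_sum_erase _ h (by simp)]

private lemma sq_pair_le (x : E) {i j : Fin p} (hij : i ≠ j) :
    x i ^ 2 + x j ^ 2 ≤ ‖x‖ ^ 2 := by
  rw [normsq, sum_split hij (fun k => x k ^ 2)]
  have : (0:ℝ) ≤ ∑ k ∈ (Finset.univ.erase i).erase j, x k ^ 2 :=
    Finset.sum_nonneg fun k _ => sq_nonneg _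
  linarith

private lemma integrable_aux {g : ℝ → ℝ} (hg : Measurable g) (hg0 : ∀ t, 0 ≤ t → 0 ≤ g t)
    (hint : Integrable (fun y : E => g (‖y‖ ^ 2) * ‖y‖ ^ 4))
    (P : E → ℝ) (hP : Measurable P) (C : ℝ)
    (hbound : ∀ y, |P y| ≤ C * ‖y‖ ^ 4) :
    Integrable (fun y : E => g (‖y‖ ^ 2) * P y) := by
  refine Integrable.mono' (hint.const_mul C) ?_ ?_
  · exact ((hg.comp ((measurable_norm).pow_const 2)).mul hP).aestronglyMeasurable
  · refine Filter.Eventually.of_forall fun y => ?_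
    have h0 : 0 ≤ g (‖y‖ ^ 2) := hg0 _ (by positivity)
    rw [Real.norm_eq_abs, abs_mul, abs_of_nonneg h0]
    calc g (‖y‖ ^ 2) * |P y| ≤ g (‖y‖ ^ 2) * (C * ‖y‖ ^ 4) :=
          mul_le_mul_of_nonneg_left (hbound y) h0
      _ = C * (g (‖y‖ ^ 2) * ‖y‖ ^ 4) := by ring

private noncomputable def rotFun (i j : Fin p) (y : E) : E :=
  WithLp.toLp 2 fun k => if k = i then (y i + y j) / Real.sqrt 2
    else if k = j then (y i - y j) / Real.sqrt 2 else y k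

private lemma rotFun_apply_i {i j : Fin p} (y : E) :
    rotFun i j y i = (y i + y j) / Real.sqrt 2 := by simp [rotFun]

private lemma rotFun_apply_j {i j : Fin p} (hij : i ≠ j) (y : E) :
    rotFun i j y j = (y i - y j) / Real.sqrt 2 := by simp [rotFun, hij.symm]

private lemma rotFun_apply_other {i j k : Fin p} (hki : k ≠ i) (hkj : k ≠ j) (y : E) :
    rotFun i j y k = y k := by simp [rotFun, hki, hkj]

private lemma sqrt_two_sq : Real.sqrt 2 * Real.sqrt 2 = 2 :=
  Real.mul_self_sqrt (by norm_num)

private noncomputable def rotL (i j : Fin p) : E →ₗ[ℝ] E where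
  toFun := rotFun i j
  map_add' x y := by
    ext k
    simp only [rotFun, PiLp.add_apply, PiLp.toLp_apply]
    split_ifs <;> ring
  map_smul' c x := by
    ext k
    simp only [rotFun, PiLp.toLp_apply, PiLp.smul_apply, smul_eq_mul, RingHom.id_apply]
    split_ifs <;> ring

private lemma rotFun_norm {i j : Fin p} (hij : i ≠ j) (y : E) : ‖rotFun i j y‖ = ‖y‖ := by
  have h2 : ‖rotFun i j y‖ ^ 2 = ‖y‖ ^ 2 := by
    rw [normsq, normsq, sum_split hij, sum_split hij (fun k => y k ^ 2)]
    have he : ∑ k ∈ (Finset.univ.erase i).erase j, rotFun i j y k ^ 2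
        = ∑ k ∈ (Finset.univ.erase i).erase j, y k ^ 2 := by
      refine Finset.sum_congr rfl fun k hk => ?_
      rw [Finset.mem_erase, Finset.mem_erase] at hk
      rw [rotFun_apply_other hk.2.1 hk.1]
    rw [he, rotFun_apply_i, rotFun_apply_j hij]
    have hs : Real.sqrt 2 ≠ 0 := by positivity
    field_simp
    rw [Real.sq_sqrt (by norm_num : (0:ℝ) ≤ 2)]
    ring_nf
  have := congrArg Real.sqrt h2
  rwa [Real.sqrt_sq (norm_nonneg _), Real.sqrt_sq (norm_nonneg _)] at this

private lemma rotFun_involutive {i j : Fin p} (hij : i ≠ j) :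
    Function.Involutive (rotFun i j) := by
  intro y
  ext k
  rcases eq_or_ne k i with rfl | hki
  · rw [rotFun_apply_i, rotFun_apply_i, rotFun_apply_j hij]
    have hs : Real.sqrt 2 ≠ 0 := by positivity
    field_simp
    rw [Real.sq_sqrt (by norm_num : (0:ℝ) ≤ 2)]
    ring
  · rcases eq_or_ne k j with rfl | hkj
    · rw [rotFun_apply_j hij, rotFun_apply_i, rotFun_apply_j hij]
      have hs : Real.sqrt 2 ≠ 0 := by positivity
      field_simp
      rw [Real.sq_sqrt (by norm_num : (0:ℝ) ≤ 2)]
      ring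
    · rw [rotFun_apply_other hki hkj, rotFun_apply_other hki hkj]

private noncomputable def rot (i j : Fin p) (hij : i ≠ j) : E ≃ₗᵢ[ℝ] E where
  toLinearEquiv := LinearEquiv.ofInvolutive (rotL i j) (rotFun_involutive hij)
  norm_map' := rotFun_norm hij

private lemma rot_apply {i j : Fin p} (hij : i ≠ j) (y : E) :
    rot i j hij y = rotFun i j y := rfl

private noncomputable def swapIso (i j : Fin p) : E ≃ₗᵢ[ℝ] E :=
  LinearIsometryEquiv.piLpCongrLeft 2 ℝ ℝ (Equiv.swap i j)

private lemma swapIso_apply (i j : Fin p) (y : E) (k : Fin p) :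
    swapIso i j y k = y (Equiv.swap i j k) := by
  simp [swapIso, LinearIsometryEquiv.piLpCongrLeft_apply, Equiv.piCongrLeft'_apply]

private lemma sqrt_two_pow_four : (Real.sqrt 2) ^ 4 = 4 := by
  have := sqrt_two_sq
  nlinarith

end Helpers

set_option maxHeartbeats 2000000 in
/-- fourth-moment variance identity for eigenvalue ratios.
If `y ↦ g(‖y‖²) ‖y‖⁴` is Lebesgue-integrable on `ℝ^p` with `g ≥ 0`, then for
any two orthonormal vectors `u, v ∈ ℝ^p`,
`∫ g(‖y‖²) ((uᵀy)² − (vᵀy)²)² dy = (4/(p(p+2))) ∫ g(‖y‖²) ‖y‖⁴ dy`. -/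
theorem spherical_fourth_moment_variance
    {p : ℕ} (hp : 1 ≤ p)
    (g : ℝ → ℝ) (hg : Measurable g) (hg0 : ∀ t, 0 ≤ t → 0 ≤ g t)
    (hint : Integrable (fun y : EuclideanSpace ℝ (Fin p) => g (‖y‖ ^ 2) * ‖y‖ ^ 4))
    (u v : EuclideanSpace ℝ (Fin p))
    (hu : ‖u‖ = 1) (hv : ‖v‖ = 1) (huv : (∑ k, u k * v k) = 0) :
    ∫ y : EuclideanSpace ℝ (Fin p),
        g (‖y‖ ^ 2) * ((∑ k, u k * y k) ^ 2 - (∑ k, v k * y k) ^ 2) ^ 2 =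
      (4 / (p * (p + 2) : ℝ)) *
        ∫ y : EuclideanSpace ℝ (Fin p), g (‖y‖ ^ 2) * ‖y‖ ^ 4 := by
  classical
  by_cases hp2 : 2 ≤ p
  swap
  · -- `p = 1`: the hypotheses are contradictory
    exfalso
    have hp1 : p = 1 := by omega
    subst hp1
    have hu2 : u 0 ^ 2 = 1 := by
      have := normsq u
      rw [hu] at this
      simpa [Fin.sum_univ_one] using this.symm
    have hv2 : v 0 ^ 2 = 1 := by
      have := normsq v
      rw [hv] at this
      simpa [Fin.sum_univ_one] using this.symm
    rw [Fin.sum_univ_one] at huv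
    nlinarith
  -- main case `p ≥ 2`
  set i0 : Fin p := ⟨0, by omega⟩ with hi0
  set i1 : Fin p := ⟨1, by omega⟩ with hi1
  have h01 : i0 ≠ i1 := by simp [hi0, hi1, Fin.ext_iff]
  have hinner : ∀ a y : EuclideanSpace ℝ (Fin p), (inner ℝ a y : ℝ) = ∑ k, a k * y k := by
    intro a y
    simp [PiLp.inner_apply, RCLike.inner_apply, mul_comm]
  -- extend `u, v` to an orthonormal basis
  set w : Fin p → EuclideanSpace ℝ (Fin p) :=
    fun k => if k = i0 then u else if k = i1 then v else 0 with hwdef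
  have hw : Orthonormal ℝ (Set.restrict {i0, i1} w) := by
    rw [orthonormal_iff_ite]
    rintro ⟨a, ha⟩ ⟨b, hb⟩
    simp only [Set.mem_insert_iff, Set.mem_singleton_iff] at ha hb
    have huu : (inner ℝ u u : ℝ) = 1 := by rw [real_inner_self_eq_norm_sq, hu]; norm_num
    have hvv : (inner ℝ v v : ℝ) = 1 := by rw [real_inner_self_eq_norm_sq, hv]; norm_num
    have huv' : (inner ℝ u v : ℝ) = 0 := by rw [hinner]; exact huv
    have hvu : (inner ℝ v u : ℝ) = 0 := by rw [real_inner_comm]; exact huv'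
    rcases ha with rfl | rfl <;> rcases hb with rfl | rfl <;>
      simp [Set.restrict, hwdef, h01, h01.symm, huu, hvv, huv', hvu, Subtype.mk.injEq, hu, hv]
  obtain ⟨b, hbext⟩ :=
    hw.exists_orthonormalBasis_extension_of_card_eq (finrank_euclideanSpace (𝕜 := ℝ))
  have hb0 : b i0 = u := by
    have := hbext i0 (by simp)
    simpa [hwdef] using this
  have hb1 : b i1 = v := by
    have := hbext i1 (by simp)
    simpa [hwdef, h01.symm] using this
  set T := b.repr with hT
  have hu' : ∀ y, (∑ k, u k * y k) = T y i0 := by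
    intro y
    rw [hT, OrthonormalBasis.repr_apply_apply, hb0, hinner]
  have hv' : ∀ y, (∑ k, v k * y k) = T y i1 := by
    intro y
    rw [hT, OrthonormalBasis.repr_apply_apply, hb1, hinner]
  -- reduce LHS to coordinates
  have hLHS : (∫ y : EuclideanSpace ℝ (Fin p),
        g (‖y‖ ^ 2) * ((∑ k, u k * y k) ^ 2 - (∑ k, v k * y k) ^ 2) ^ 2)
      = ∫ x : EuclideanSpace ℝ (Fin p), g (‖x‖ ^ 2) * (x i0 ^ 2 - x i1 ^ 2) ^ 2 := by
    calc (∫ y : EuclideanSpace ℝ (Fin p),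
          g (‖y‖ ^ 2) * ((∑ k, u k * y k) ^ 2 - (∑ k, v k * y k) ^ 2) ^ 2)
        = ∫ y : EuclideanSpace ℝ (Fin p),
            g (‖T y‖ ^ 2) * ((T y) i0 ^ 2 - (T y) i1 ^ 2) ^ 2 := by
          congr 1
          funext y
          rw [hu' y, hv' y, LinearIsometryEquiv.norm_map]
      _ = _ := lie_integral T (fun x => g (‖x‖ ^ 2) * (x i0 ^ 2 - x i1 ^ 2) ^ 2)
  -- moment notation
  set A : Fin p → ℝ := fun i => ∫ y : EuclideanSpace ℝ (Fin p), g (‖y‖ ^ 2) * y i ^ 4 with hAdef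
  set B : Fin p → Fin p → ℝ :=
    fun i j => ∫ y : EuclideanSpace ℝ (Fin p), g (‖y‖ ^ 2) * (y i ^ 2 * y j ^ 2) with hBdef
  -- integrability of the monomials
  have hInt2 : ∀ i j : Fin p,
      Integrable (fun y : EuclideanSpace ℝ (Fin p) => g (‖y‖ ^ 2) * (y i ^ 2 * y j ^ 2)) := by
    intro i j
    refine integrable_aux hg hg0 hint _
      (((PiLp.continuous_apply _ _ i).measurable.pow_const 2).mul ((PiLp.continuous_apply _ _ j).measurable.pow_const 2)) 1
      fun y => ?_
    rw [abs_of_nonneg (by positivity)]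
    calc y i ^ 2 * y j ^ 2 ≤ ‖y‖ ^ 2 * ‖y‖ ^ 2 :=
          mul_le_mul (sq_apply_le y i) (sq_apply_le y j) (sq_nonneg _) (sq_nonneg _)
      _ = 1 * ‖y‖ ^ 4 := by ring
  have hInt4 : ∀ i : Fin p,
      Integrable (fun y : EuclideanSpace ℝ (Fin p) => g (‖y‖ ^ 2) * y i ^ 4) := by
    intro i
    have h := hInt2 i i
    have : (fun y : EuclideanSpace ℝ (Fin p) => g (‖y‖ ^ 2) * (y i ^ 2 * y i ^ 2))
        = fun y => g (‖y‖ ^ 2) * y i ^ 4 := funext fun y => by ring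
    rwa [this] at h
  have hIntpm : ∀ (i j : Fin p), i ≠ j → ∀ (c : ℝ), c ^ 2 ≤ 1 →
      Integrable (fun y : EuclideanSpace ℝ (Fin p) =>
        g (‖y‖ ^ 2) * ((y i + c * y j) / Real.sqrt 2) ^ 4) := by
    intro i j hij c hc
    refine integrable_aux hg hg0 hint _
      ((((PiLp.continuous_apply 2 (fun _ : Fin p => ℝ) i).measurable.add ((PiLp.continuous_apply 2 (fun _ : Fin p => ℝ) j).measurable.const_mul c)).div_const _).pow_const 4)
      1 fun y => ?_
    rw [abs_of_nonneg (by positivity), div_pow, sqrt_two_pow_four]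
    have hpair := sq_pair_le y hij
    have h1 : (y i + c * y j) ^ 2 ≤ 2 * ‖y‖ ^ 2 := by
      nlinarith [sq_nonneg (y i - c * y j), sq_nonneg (y j), sq_apply_le y i, sq_apply_le y j]
    have h2 : (y i + c * y j) ^ 4 ≤ (2 * ‖y‖ ^ 2) ^ 2 := by
      calc (y i + c * y j) ^ 4 = ((y i + c * y j) ^ 2) ^ 2 := by ring
        _ ≤ (2 * ‖y‖ ^ 2) ^ 2 := pow_le_pow_left₀ (sq_nonneg _) h1 2
    nlinarith [sq_nonneg (‖y‖ ^ 2)]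
  -- coordinate exchange: all pure fourth moments agree
  have hA : ∀ i j : Fin p, A i = A j := by
    intro i j
    have hswap := lie_integral (swapIso i j)
      (fun y : EuclideanSpace ℝ (Fin p) => g (‖y‖ ^ 2) * y j ^ 4)
    calc A i = ∫ y : EuclideanSpace ℝ (Fin p),
          g (‖swapIso i j y‖ ^ 2) * (swapIso i j y) j ^ 4 := by
          show (∫ y : EuclideanSpace ℝ (Fin p), g (‖y‖ ^ 2) * y i ^ 4) = _
          congr 1
          funext y
          rw [LinearIsometryEquiv.norm_map, swapIso_apply, Equiv.swap_apply_right]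
      _ = A j := hswap
  -- the 45-degree rotation identities
  have hrotplus : ∀ (i j : Fin p) (hij : i ≠ j),
      A i = ∫ y : EuclideanSpace ℝ (Fin p),
        g (‖y‖ ^ 2) * ((y i + y j) / Real.sqrt 2) ^ 4 := by
    intro i j hij
    have := lie_integral (rot i j hij)
      (fun y : EuclideanSpace ℝ (Fin p) => g (‖y‖ ^ 2) * y i ^ 4)
    show (∫ y : EuclideanSpace ℝ (Fin p), g (‖y‖ ^ 2) * y i ^ 4) = _
    rw [← this]
    congr 1
    funext y
    rw [rot_apply hij, rotFun_norm hij, rotFun_apply_i]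
  have hrotminus : ∀ (i j : Fin p) (hij : i ≠ j),
      A j = ∫ y : EuclideanSpace ℝ (Fin p),
        g (‖y‖ ^ 2) * ((y i - y j) / Real.sqrt 2) ^ 4 := by
    intro i j hij
    have := lie_integral (rot i j hij)
      (fun y : EuclideanSpace ℝ (Fin p) => g (‖y‖ ^ 2) * y j ^ 4)
    show (∫ y : EuclideanSpace ℝ (Fin p), g (‖y‖ ^ 2) * y j ^ 4) = _
    rw [← this]
    congr 1
    funext y
    rw [rot_apply hij, rotFun_norm hij, rotFun_apply_j hij]
  -- mixed moment relation: A i + A j = 6 * B i j for i ≠ j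
  have hAB : ∀ (i j : Fin p), i ≠ j → A i + A j = 6 * B i j := by
    intro i j hij
    have hIp : Integrable (fun y : EuclideanSpace ℝ (Fin p) =>
        g (‖y‖ ^ 2) * ((y i + y j) / Real.sqrt 2) ^ 4) := by
      have := hIntpm i j hij 1 (by norm_num)
      simpa using this
    have hIm : Integrable (fun y : EuclideanSpace ℝ (Fin p) =>
        g (‖y‖ ^ 2) * ((y i - y j) / Real.sqrt 2) ^ 4) := by
      have := hIntpm i j hij (-1) (by norm_num)
      have heq : (fun y : EuclideanSpace ℝ (Fin p) =>
          g (‖y‖ ^ 2) * ((y i + (-1) * y j) / Real.sqrt 2) ^ 4)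
          = fun y => g (‖y‖ ^ 2) * ((y i - y j) / Real.sqrt 2) ^ 4 :=
        funext fun y => by ring_nf
      rwa [heq] at this
    have hsum : A i + A j = ∫ y : EuclideanSpace ℝ (Fin p),
        (g (‖y‖ ^ 2) * ((y i + y j) / Real.sqrt 2) ^ 4
          + g (‖y‖ ^ 2) * ((y i - y j) / Real.sqrt 2) ^ 4) := by
      rw [hrotplus i j hij, hrotminus i j hij, ← integral_add hIp hIm]
    have hptwise : (fun y : EuclideanSpace ℝ (Fin p) =>
        g (‖y‖ ^ 2) * ((y i + y j) / Real.sqrt 2) ^ 4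
          + g (‖y‖ ^ 2) * ((y i - y j) / Real.sqrt 2) ^ 4)
        = fun y => (1/2) * (g (‖y‖ ^ 2) * y i ^ 4)
            + ((1/2) * (g (‖y‖ ^ 2) * y j ^ 4) + 3 * (g (‖y‖ ^ 2) * (y i ^ 2 * y j ^ 2))) := by
      funext y
      rw [div_pow, div_pow, sqrt_two_pow_four]
      ring
    rw [hptwise] at hsum
    have hI1 : Integrable (fun y : EuclideanSpace ℝ (Fin p) =>
        (1/2) * (g (‖y‖ ^ 2) * y i ^ 4)) := (hInt4 i).const_mul _
    have hI2 : Integrable (fun y : EuclideanSpace ℝ (Fin p) =>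
        (1/2) * (g (‖y‖ ^ 2) * y j ^ 4)) := (hInt4 j).const_mul _
    have hI3 : Integrable (fun y : EuclideanSpace ℝ (Fin p) =>
        3 * (g (‖y‖ ^ 2) * (y i ^ 2 * y j ^ 2))) := (hInt2 i j).const_mul _
    have hI23 : Integrable (fun y : EuclideanSpace ℝ (Fin p) =>
        (1/2) * (g (‖y‖ ^ 2) * y j ^ 4) + 3 * (g (‖y‖ ^ 2) * (y i ^ 2 * y j ^ 2))) :=
      hI2.add hI3
    rw [integral_add hI1 hI23, integral_add hI2 hI3,
      integral_const_mul, integral_const_mul, integral_const_mul] at hsum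
    have eAi : A i = ∫ y : EuclideanSpace ℝ (Fin p), g (‖y‖ ^ 2) * y i ^ 4 := rfl
    have eAj : A j = ∫ y : EuclideanSpace ℝ (Fin p), g (‖y‖ ^ 2) * y j ^ 4 := rfl
    have eB : B i j = ∫ y : EuclideanSpace ℝ (Fin p), g (‖y‖ ^ 2) * (y i ^ 2 * y j ^ 2) := rfl
    rw [eAi, eAj, eB]
    rw [eAi, eAj] at hsum
    linarith [hsum]
  -- the left-hand side equals 4 * B i0 i1
  have hC : (∫ x : EuclideanSpace ℝ (Fin p), g (‖x‖ ^ 2) * (x i0 ^ 2 - x i1 ^ 2) ^ 2)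
      = 4 * B i0 i1 := by
    have := lie_integral (rot i0 i1 h01)
      (fun x : EuclideanSpace ℝ (Fin p) => g (‖x‖ ^ 2) * (x i0 ^ 2 - x i1 ^ 2) ^ 2)
    rw [← this]
    have hptwise : (fun y : EuclideanSpace ℝ (Fin p) =>
        g (‖rot i0 i1 h01 y‖ ^ 2) * ((rot i0 i1 h01 y) i0 ^ 2 - (rot i0 i1 h01 y) i1 ^ 2) ^ 2)
        = fun y => 4 * (g (‖y‖ ^ 2) * (y i0 ^ 2 * y i1 ^ 2)) := by
      funext y
      rw [rot_apply h01, rotFun_norm h01, rotFun_apply_i, rotFun_apply_j h01, div_pow, div_pow,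
        Real.sq_sqrt (by norm_num : (0:ℝ) ≤ 2)]
      ring
    rw [hptwise, integral_const_mul]
  -- expansion of the norm-fourth integral
  set a : ℝ := A i0 with hadef
  have hBval : ∀ (i j : Fin p), i ≠ j → B i j = a / 3 := by
    intro i j hij
    have h1 := hAB i j hij
    have h2 : A i = a := hA i i0
    have h3 : A j = a := hA j i0
    rw [h2, h3] at h1
    linarith
  have hBdiag : ∀ i : Fin p, B i i = a := by
    intro i
    have : B i i = A i := by
      show (∫ y : EuclideanSpace ℝ (Fin p), g (‖y‖ ^ 2) * (y i ^ 2 * y i ^ 2))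
        = ∫ y : EuclideanSpace ℝ (Fin p), g (‖y‖ ^ 2) * y i ^ 4
      congr 1
      funext y
      ring
    rw [this, hA i i0]
  have hS : (∫ y : EuclideanSpace ℝ (Fin p), g (‖y‖ ^ 2) * ‖y‖ ^ 4)
      = ∑ i, ∑ j, B i j := by
    calc (∫ y : EuclideanSpace ℝ (Fin p), g (‖y‖ ^ 2) * ‖y‖ ^ 4)
        = ∫ y : EuclideanSpace ℝ (Fin p), ∑ i, ∑ j, g (‖y‖ ^ 2) * (y i ^ 2 * y j ^ 2) := by
          congr 1
          funext y
          rw [show ‖y‖ ^ 4 = (‖y‖ ^ 2) * (‖y‖ ^ 2) by ring, normsq y,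
            Finset.sum_mul_sum]
          rw [Finset.mul_sum]
          refine Finset.sum_congr rfl fun i _ => ?_
          rw [Finset.mul_sum]
      _ = ∑ i, ∑ j, B i j := by
          rw [integral_finset_sum _ (fun i _ => integrable_finset_sum _ fun j _ => hInt2 i j)]
          exact Finset.sum_congr rfl fun i _ =>
            integral_finset_sum _ fun j _ => hInt2 i j
  have hinner_sum : ∀ i : Fin p, ∑ j, B i j = a + (p - 1 : ℝ) * (a / 3) := by
    intro i
    rw [← Finset.add_sum_erase _ _ (Finset.mem_univ i), hBdiag i]
    congr 1
    rw [Finset.sum_congr rfl (fun j hj => hBval i j (Finset.ne_of_mem_erase hj).symm),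
      Finset.sum_const, Finset.card_erase_of_mem (Finset.mem_univ i), Finset.card_univ,
      Fintype.card_fin, nsmul_eq_mul]
    congr 1
    push_cast [Nat.cast_sub (by omega : 1 ≤ p)]
    ring
  have hSval : (∫ y : EuclideanSpace ℝ (Fin p), g (‖y‖ ^ 2) * ‖y‖ ^ 4)
      = p * (a + (p - 1 : ℝ) * (a / 3)) := by
    rw [hS, Finset.sum_congr rfl fun i _ => hinner_sum i, Finset.sum_const, Finset.card_univ,
      Fintype.card_fin, nsmul_eq_mul]
  -- put everything together
  rw [hLHS, hC, hBval i0 i1 h01, hSval]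
  have hp0 : (0:ℝ) < p := by exact_mod_cast Nat.pos_of_ne_zero (by omega)
  have hp0' : (p:ℝ) ≠ 0 := ne_of_gt hp0
  have hp2' : (p:ℝ) + 2 ≠ 0 := by positivity
  field_simp
  ring
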